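/- For pairwise commuting non-identity Paulis P₁, P₂, P₃, the ratio G_{P₁,−P₂,P₃}·G_{P₁,P₂,P₃}⁻¹ equals exp(iπP₂/4)·exp(−iπP₁P₂/4)·exp(−iπP₂P₃/4)·exp(iπP₁P₂P₃/4), which is a product of Clifford operators; hence G_{P₁,−P₂,P₃} = G_{P₁,P₂,P₃}·C for some Clifford C. -/

import Mathlib

open Matrix Complex

noncomputable def pauli1 : Fin 4 → Matrix (Fin 2) (Fin 2) ℂ
  | 0 => 1
  | 1 => !![0, 1; 1, 0]
  | 2 => !![0, -Complex.I; Complex.I, 0]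
  | 3 => !![1, 0; 0, -1]

noncomputable def nPauli (n : ℕ) (f : Fin n → Fin 4) :
    Matrix (Fin n → Fin 2) (Fin n → Fin 2) ℂ :=
  Matrix.of fun i j => ∏ k, pauli1 (f k) (i k) (j k)

def PauliSet (n : ℕ) : Set (Matrix (Fin n → Fin 2) (Fin n → Fin 2) ℂ) :=
  Set.range (nPauli n)

noncomputable def gMat {n : ℕ} (P₁ P₂ P₃ : Matrix (Fin n → Fin 2) (Fin n → Fin 2) ℂ) :
    Matrix (Fin n → Fin 2) (Fin n → Fin 2) ℂ :=
  (3/4 : ℂ) • 1 + (1/4 : ℂ) • (P₁ + P₂ + P₃ - P₁*P₂ - P₂*P₃ - P₃*P₁ + P₁*P₂*P₃)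

/-- exp(iπA/4) = (I + iA)/√2 for a Pauli A. -/
noncomputable def expPauli {n : ℕ} (s : ℂ) (A : Matrix (Fin n → Fin 2) (Fin n → Fin 2) ℂ) :
    Matrix (Fin n → Fin 2) (Fin n → Fin 2) ℂ :=
  ((Real.sqrt 2 : ℂ))⁻¹ • (1 + (s * Complex.I) • A)

/-! ### Single-qubit Pauli algebra -/

def mix : Fin 4 → Fin 4 → Fin 4
  | 0, x => x
  | 1, 0 => 1 | 1, 1 => 0 | 1, 2 => 3 | 1, 3 => 2
  | 2, 0 => 2 | 2, 1 => 3 | 2, 2 => 0 | 2, 3 => 1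
  | 3, 0 => 3 | 3, 1 => 2 | 3, 2 => 1 | 3, 3 => 0

noncomputable def ph : Fin 4 → Fin 4 → ℂ
  | 1, 2 => Complex.I | 2, 3 => Complex.I | 3, 1 => Complex.I
  | 2, 1 => -Complex.I | 3, 2 => -Complex.I | 1, 3 => -Complex.I
  | _, _ => 1

lemma abs_ph (a b : Fin 4) : ‖ph a b‖ = 1 := by
  fin_cases a <;> fin_cases b <;> simp [ph]

lemma ph_symm (a b : Fin 4) : ph a b = ph b a ∨ ph a b = -ph b a := by
  fin_cases a <;> fin_cases b <;> simp [ph]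

lemma mix_symm (a b : Fin 4) : mix a b = mix b a := by
  fin_cases a <;> fin_cases b <;> rfl

lemma mix_self (a : Fin 4) : mix a a = 0 := by fin_cases a <;> rfl
lemma ph_self (a : Fin 4) : ph a a = 1 := by fin_cases a <;> rfl

lemma pauli1_herm (a : Fin 4) : (pauli1 a)ᴴ = pauli1 a := by
  fin_cases a <;> ext i j <;> fin_cases i <;> fin_cases j <;>
    simp [pauli1, Matrix.conjTranspose_apply, Matrix.one_apply]

lemma tbl (a b : Fin 4) : pauli1 a * pauli1 b = ph a b • pauli1 (mix a b) := by
  fin_cases a <;> fin_cases b <;>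
    ext i j <;> fin_cases i <;> fin_cases j <;>
    simp [pauli1, ph, mix, Matrix.mul_apply, Fin.sum_univ_two, Matrix.one_apply]

/-! ### n-qubit Pauli lemmas -/

lemma nPauli_mul (n : ℕ) (f g : Fin n → Fin 4) :
    nPauli n f * nPauli n g =
      (∏ k, ph (f k) (g k)) • nPauli n (fun k => mix (f k) (g k)) := by
  ext i j
  simp only [nPauli, Matrix.mul_apply, Matrix.of_apply, Matrix.smul_apply, smul_eq_mul]
  have h1 : ∀ x : Fin n → Fin 2,
      (∏ k, pauli1 (f k) (i k) (x k)) * ∏ k, pauli1 (g k) (x k) (j k)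
        = ∏ k, (pauli1 (f k) (i k) (x k) * pauli1 (g k) (x k) (j k)) := by
    intro x; rw [Finset.prod_mul_distrib]
  rw [Finset.sum_congr rfl fun x _ => h1 x]
  have h2 := Finset.prod_univ_sum (fun _ : Fin n => (Finset.univ : Finset (Fin 2)))
    (fun k y => pauli1 (f k) (i k) y * pauli1 (g k) y (j k))
  rw [Fintype.piFinset_univ] at h2
  rw [← h2]
  rw [← Finset.prod_mul_distrib]
  refine Finset.prod_congr rfl fun k _ => ?_
  have := congrFun (congrFun (tbl (f k) (g k)) (i k)) (j k)
  simpa [Matrix.mul_apply, Matrix.smul_apply] using this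

lemma nPauli_zero (n : ℕ) : nPauli n (fun _ => 0) = 1 := by
  ext i j
  simp only [nPauli, Matrix.of_apply, pauli1, Matrix.one_apply]
  rw [Finset.prod_congr rfl (fun k _ => by
    show (1 : Matrix (Fin 2) (Fin 2) ℂ) (i k) (j k) = if i k = j k then 1 else 0
    simp [Matrix.one_apply])]
  rw [Finset.prod_boole]
  simp [funext_iff]

lemma pauli_sq {n : ℕ} {X : Matrix (Fin n → Fin 2) (Fin n → Fin 2) ℂ}
    (h : X ∈ PauliSet n) : X * X = 1 := by
  obtain ⟨f, rfl⟩ := h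
  rw [nPauli_mul]
  simp [ph_self, mix_self, nPauli_zero]

lemma pauli_herm {n : ℕ} {X : Matrix (Fin n → Fin 2) (Fin n → Fin 2) ℂ}
    (h : X ∈ PauliSet n) : Xᴴ = X := by
  obtain ⟨f, rfl⟩ := h
  ext i j
  simp only [nPauli, Matrix.conjTranspose_apply, Matrix.of_apply]
  rw [show (star (∏ k, pauli1 (f k) (j k) (i k)) : ℂ)
      = ∏ k, star (pauli1 (f k) (j k) (i k)) from map_prod (starRingEnd ℂ) _ _]
  refine Finset.prod_congr rfl fun k _ => ?_
  have := congrFun (congrFun (pauli1_herm (f k)) (i k)) (j k)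
  simpa [Matrix.conjTranspose_apply] using this

lemma pauli_mul_pauli {n : ℕ} {X Y : Matrix (Fin n → Fin 2) (Fin n → Fin 2) ℂ}
    (hX : X ∈ PauliSet n) (hY : Y ∈ PauliSet n) :
    ∃ (z : ℂ) (P : Matrix (Fin n → Fin 2) (Fin n → Fin 2) ℂ),
      P ∈ PauliSet n ∧ ‖z‖ = 1 ∧ X * Y = z • P := by
  obtain ⟨f, rfl⟩ := hX
  obtain ⟨g, rfl⟩ := hY
  refine ⟨∏ k, ph (f k) (g k), nPauli n (fun k => mix (f k) (g k)),
    ⟨_, rfl⟩, ?_, nPauli_mul n f g⟩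
  rw [norm_prod]
  simp [abs_ph]

lemma prod_pm {ι : Type*} (s : Finset ι) (u v : ι → ℂ)
    (h : ∀ k ∈ s, u k = v k ∨ u k = -v k) :
    (∏ k ∈ s, u k) = (∏ k ∈ s, v k) ∨ (∏ k ∈ s, u k) = -(∏ k ∈ s, v k) := by
  induction s using Finset.cons_induction with
  | empty => simp
  | cons a s ha ih =>
    rw [Finset.prod_cons, Finset.prod_cons]
    rcases ih (fun k hk => h k (Finset.mem_cons_of_mem hk)) with h1 | h1 <;>
      rcases h a (Finset.mem_cons_self a s) with h2 | h2 <;>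
      rw [h1, h2] <;> simp [mul_comm]

lemma pauli_comm_or_anti {n : ℕ} {X Y : Matrix (Fin n → Fin 2) (Fin n → Fin 2) ℂ}
    (hX : X ∈ PauliSet n) (hY : Y ∈ PauliSet n) :
    X * Y = Y * X ∨ X * Y = -(Y * X) := by
  obtain ⟨f, rfl⟩ := hX
  obtain ⟨g, rfl⟩ := hY
  rw [nPauli_mul, nPauli_mul]
  have hm : (fun k => mix (g k) (f k)) = fun k => mix (f k) (g k) := by
    funext k; exact mix_symm (g k) (f k)
  rw [hm]
  rcases prod_pm Finset.univ (fun k => ph (f k) (g k)) (fun k => ph (g k) (f k))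
    (fun k _ => ph_symm (f k) (g k)) with h | h
  · left; rw [h]
  · right; rw [h, neg_smul]

/-! ### Commutative-ring identities -/

section CommLemmas
variable {R : Type*} [CommRing R] {a b d i : R}

lemma lem_sq (ha : a * a = 1) (hb : b * b = 1) (hd : d * d = 1) :
    (3 + (a + b + d - a*b - b*d - d*a + a*b*d)) *
      (3 + (a + b + d - a*b - b*d - d*a + a*b*d)) = 16 := by
  linear_combination (1 - 2*d + d^2 - 2*b + 4*b*d - 2*b*d^2 + b^2 - 2*b^2*d + b^2*d^2) * ha +
    (2 - 4*d + 2*d^2 - 2*a + 4*a*d - 2*a*d^2) * hb + (4 - 4*b - 4*a + 4*a*b) * hd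

lemma lem1 (ha : a * a = 1) (hb : b * b = 1) :
    (3 + (a + -b + d - a*(-b) - (-b)*d - d*a + a*(-b)*d)) *
      (3 + (a + b + d - a*b - b*d - d*a + a*b*d)) = 8 * (1 + a + d - a*d) := by
  linear_combination (1 - 2*d + d^2 - b^2 + 2*b^2*d - b^2*d^2) * ha +
    (-2 + 4*d - 2*d^2 + 2*a - 4*a*d + 2*a*d^2) * hb

lemma lem2 (ha : a * a = 1) (hb : b * b = 1) (hd : d * d = 1) (hi : i * i = -1) :
    (1 + i*b) * (1 - i*(a*b)) * (1 - i*(b*d)) * (1 + i*(a*b*d)) =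
      2 * (1 + a + d - a*d) := by
  linear_combination (-b^2*d*i^2 - b^3*d*i^3 + b^3*d^2*i^3 + b^4*d^2*i^4) * ha +
    (-2*d*i^2 + d^2*i^4 - b*d*i^3 + b*d^2*i^3 + b^2*d^2*i^4 - a*i^2 + 2*a*d*i^2
      - a*d^2*i^2 + a*b*d*i^3 - a*b*d^2*i^3) * hb +
    (i^4 + b*i^3 - a*i^2 - a*b*i^3) * hd +
    (-1 + i^2 - 2*d + b*i - b*d*i - 2*a + 2*a*d - a*b*i + a*b*d*i) * hi

lemma lemc1 (ha : a * a = 1) (hd : d * d = 1) :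
    (1 + a + d - a*d) * (1 + a + d - a*d) = 4 := by
  linear_combination (1 - 2*d + d^2) * ha + (2 - 2*a) * hd

lemma lemc2 (ha : a * a = 1) :
    (1 - a + d + a*d) * (1 + a + d - a*d) = 4 * d := by
  linear_combination (-1 + 2*d - d^2) * ha

lemma lemc3 (ha : a * a = 1) (hd : d * d = 1) :
    (1 + a - d + a*d) * (1 + a + d - a*d) = 4 * a := by
  linear_combination (1 - d^2) * ha + (-2 + 2*a) * hd

lemma lemc4 (ha : a * a = 1) :
    (1 - a - d - a*d) * (1 + a + d - a*d) = -(4 * (a*d)) := by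
  linear_combination (-1 + d^2) * ha

end CommLemmas

/-! ### Noncommutative move lemmas -/

section Move
variable {R : Type*} [Ring R] {a d b : R}

lemma move1 (h1 : b * a = a * b) (h2 : b * d = d * b) :
    (1 + a + d - a*d) * b = b * (1 + a + d - a*d) := by
  have had : (a*d)*b = b*(a*d) := by
    rw [mul_assoc, ← h2, ← mul_assoc, ← h1, mul_assoc]
  simp only [add_mul, sub_mul, one_mul, mul_add, mul_sub, mul_one, ← h1, ← h2, had]

lemma move2 (h1 : b * a = -(a * b)) (h2 : b * d = d * b) :
    (1 + a + d - a*d) * b = b * (1 - a + d + a*d) := by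
  have ha' : a * b = -(b * a) := by rw [h1, neg_neg]
  have had : (a*d)*b = -(b*(a*d)) := by
    rw [mul_assoc, ← h2, ← mul_assoc, ha', neg_mul, mul_assoc]
  simp only [add_mul, sub_mul, one_mul, mul_add, mul_sub, mul_one, ha', ← h2, had]
  abel

lemma move3 (h1 : b * a = a * b) (h2 : b * d = -(d * b)) :
    (1 + a + d - a*d) * b = b * (1 + a - d + a*d) := by
  have hd' : d * b = -(b * d) := by rw [h2, neg_neg]
  have had : (a*d)*b = -(b*(a*d)) := by
    rw [mul_assoc, hd', mul_neg, ← mul_assoc, ← h1, mul_assoc]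
  simp only [add_mul, sub_mul, one_mul, mul_add, mul_sub, mul_one, ← h1, hd', had]
  abel

lemma move4 (h1 : b * a = -(a * b)) (h2 : b * d = -(d * b)) :
    (1 + a + d - a*d) * b = b * (1 - a - d - a*d) := by
  have ha' : a * b = -(b * a) := by rw [h1, neg_neg]
  have hd' : d * b = -(b * d) := by rw [h2, neg_neg]
  have had : (a*d)*b = b*(a*d) := by
    rw [mul_assoc, hd', mul_neg, ← mul_assoc, ha', neg_mul, neg_neg, mul_assoc]
  simp only [add_mul, sub_mul, one_mul, mul_add, mul_sub, mul_one, ha', hd', had]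
  abel

end Move

/-! ### Lifting to matrices -/

lemma subalg_coe_ofNat {M : Type*} [Ring M] [Algebra ℂ M] (S : Subalgebra ℂ M)
    (m : ℕ) [m.AtLeastTwo] : ((OfNat.ofNat m : ↥S) : M) = OfNat.ofNat m := by
  norm_cast

section Lift
variable {M : Type*} [Ring M] [Algebra ℂ M]

set_option maxHeartbeats 1000000 in
lemma matrix_ids (A B D : M)
    (hA : A*A = 1) (hB : B*B = 1) (hD : D*D = 1)
    (hAB : A*B = B*A) (hBD : B*D = D*B) (hDA : D*A = A*D) :
    ((3 + (A + B + D - A*B - B*D - D*A + A*B*D)) *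
      (3 + (A + B + D - A*B - B*D - D*A + A*B*D)) = 16) ∧
    ((3 + (A + -B + D - A*(-B) - (-B)*D - D*A + A*(-B)*D)) *
      (3 + (A + B + D - A*B - B*D - D*A + A*B*D)) = 8 * (1 + A + D - A*D)) ∧
    ((3 + (A + B + D - A*B - B*D - D*A + A*B*D)) *
      (3 + (A + -B + D - A*(-B) - (-B)*D - D*A + A*(-B)*D)) = 8 * (1 + A + D - A*D)) ∧
    ((1 + Complex.I • B) * (1 - Complex.I • (A*B)) * (1 - Complex.I • (B*D)) *
      (1 + Complex.I • (A*B*D)) = 2 * (1 + A + D - A*D)) ∧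
    ((1 + A + D - A*D) * (1 + A + D - A*D) = 4) ∧
    ((1 - A + D + A*D) * (1 + A + D - A*D) = 4 * D) ∧
    ((1 + A - D + A*D) * (1 + A + D - A*D) = 4 * A) ∧
    ((1 - A - D - A*D) * (1 + A + D - A*D) = -(4 * (A*D))) := by
  have hcomm : ∀ x ∈ ({A, B, D} : Set M), ∀ y ∈ ({A, B, D} : Set M), x * y = y * x := by
    rintro x hx y hy
    simp only [Set.mem_insert_iff, Set.mem_singleton_iff] at hx hy
    rcases hx with rfl|rfl|rfl <;> rcases hy with rfl|rfl|rfl <;>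
      first | rfl | assumption | exact hAB.symm | exact hBD.symm | exact hDA.symm
  set S := Algebra.adjoin ℂ ({A, B, D} : Set M) with hS
  have hAm : A ∈ S := Algebra.subset_adjoin (by simp)
  have hBm : B ∈ S := Algebra.subset_adjoin (by simp)
  have hDm : D ∈ S := Algebra.subset_adjoin (by simp)
  set a' : ↥S := ⟨A, hAm⟩ with ha'def
  set b' : ↥S := ⟨B, hBm⟩ with hb'def
  set d' : ↥S := ⟨D, hDm⟩ with hd'def
  set i' : ↥S := algebraMap ℂ ↥S Complex.I with hi'def
  have ha' : a' * a' = 1 := Subtype.ext (by push_cast; exact hA)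
  have hb' : b' * b' = 1 := Subtype.ext (by push_cast; exact hB)
  have hd' : d' * d' = 1 := Subtype.ext (by push_cast; exact hD)
  have hnb' : (-b') * (-b') = 1 := by rw [neg_mul_neg]; exact hb'
  have hi' : i' * i' = -1 := by
    rw [hi'def, ← _root_.map_mul, Complex.I_mul_I, map_neg, _root_.map_one]
  have k1 : (3 + (a' + b' + d' - a'*b' - b'*d' - d'*a' + a'*b'*d')) *
      (3 + (a' + b' + d' - a'*b' - b'*d' - d'*a' + a'*b'*d')) = 16 :=
    by letI := Algebra.adjoinCommRingOfComm ℂ hcomm; exact lem_sq ha' hb' hd'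
  have k2 : (3 + (a' + -b' + d' - a'*(-b') - (-b')*d' - d'*a' + a'*(-b')*d')) *
      (3 + (a' + b' + d' - a'*b' - b'*d' - d'*a' + a'*b'*d')) = 8*(1 + a' + d' - a'*d') :=
    by letI := Algebra.adjoinCommRingOfComm ℂ hcomm; exact lem1 ha' hb'
  have k2' : (3 + (a' + b' + d' - a'*b' - b'*d' - d'*a' + a'*b'*d')) *
      (3 + (a' + -b' + d' - a'*(-b') - (-b')*d' - d'*a' + a'*(-b')*d')) = 8*(1 + a' + d' - a'*d') :=
    by letI := Algebra.adjoinCommRingOfComm ℂ hcomm; exact (mul_comm _ _).trans k2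
  have k3 : (1 + i'*b') * (1 - i'*(a'*b')) * (1 - i'*(b'*d')) * (1 + i'*(a'*b'*d')) =
      2 * (1 + a' + d' - a'*d') :=
    by letI := Algebra.adjoinCommRingOfComm ℂ hcomm; exact lem2 ha' hb' hd' hi'
  have kc1 : (1 + a' + d' - a'*d') * (1 + a' + d' - a'*d') = 4 :=
    by letI := Algebra.adjoinCommRingOfComm ℂ hcomm; exact lemc1 ha' hd'
  have kc2 : (1 - a' + d' + a'*d') * (1 + a' + d' - a'*d') = 4 * d' :=
    by letI := Algebra.adjoinCommRingOfComm ℂ hcomm; exact lemc2 ha'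
  have kc3 : (1 + a' - d' + a'*d') * (1 + a' + d' - a'*d') = 4 * a' :=
    by letI := Algebra.adjoinCommRingOfComm ℂ hcomm; exact lemc3 ha' hd'
  have kc4 : (1 - a' - d' - a'*d') * (1 + a' + d' - a'*d') = -(4 * (a'*d')) :=
    by letI := Algebra.adjoinCommRingOfComm ℂ hcomm; exact lemc4 ha'
  have e1 := congrArg (Subtype.val) k1
  have e2 := congrArg (Subtype.val) k2
  have e2' := congrArg (Subtype.val) k2'
  have e3 := congrArg (Subtype.val) k3
  have ec1 := congrArg (Subtype.val) kc1
  have ec2 := congrArg (Subtype.val) kc2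
  have ec3 := congrArg (Subtype.val) kc3
  have ec4 := congrArg (Subtype.val) kc4
  push_cast at e1 e2 e2' e3 ec1 ec2 ec3 ec4
  rw [hi'def] at e3
  simp only [ha'def, hb'def, hd'def, Subalgebra.coe_algebraMap] at e1 e2 e2' e3 ec1 ec2 ec3 ec4

  simp only [Algebra.algebraMap_eq_smul_one, smul_mul_assoc, one_mul] at e3
  exact ⟨e1, e2, e2', e3, ec1, ec2, ec3, ec4⟩

end Lift

/-! ### Main theorem -/

set_option maxHeartbeats 1000000 in
/-- G_{P₁,−P₂,P₃}·G_{P₁,P₂,P₃}⁻¹ = exp(iπP₂/4)exp(−iπP₁P₂/4)exp(−iπP₂P₃/4)exp(iπP₁P₂P₃/4),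
a product of Cliffords; hence G_{P₁,−P₂,P₃} = G_{P₁,P₂,P₃}·C for a Clifford C. -/
theorem stmt9 (n : ℕ) (P₁ P₂ P₃ : Matrix (Fin n → Fin 2) (Fin n → Fin 2) ℂ)
    (h₁ : P₁ ∈ PauliSet n) (h₂ : P₂ ∈ PauliSet n) (h₃ : P₃ ∈ PauliSet n)
    (hni₁ : P₁ ≠ 1) (hni₂ : P₂ ≠ 1) (hni₃ : P₃ ≠ 1)
    (hc₁₂ : P₁ * P₂ = P₂ * P₁) (hc₂₃ : P₂ * P₃ = P₃ * P₂) (hc₃₁ : P₃ * P₁ = P₁ * P₃) :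
    gMat P₁ (-P₂) P₃ * (gMat P₁ P₂ P₃)⁻¹ =
      expPauli 1 P₂ * expPauli (-1) (P₁ * P₂) * expPauli (-1) (P₂ * P₃) *
        expPauli 1 (P₁ * P₂ * P₃) ∧
    ∃ C : Matrix (Fin n → Fin 2) (Fin n → Fin 2) ℂ,
      (∀ B ∈ PauliSet n, ∃ (z : ℂ) (B' : Matrix (Fin n → Fin 2) (Fin n → Fin 2) ℂ),
        B' ∈ PauliSet n ∧ ‖z‖ = 1 ∧ C * B * Cᴴ = z • B') ∧
      gMat P₁ (-P₂) P₃ = gMat P₁ P₂ P₃ * C := by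
  have hA := pauli_sq h₁
  have hB := pauli_sq h₂
  have hD := pauli_sq h₃
  obtain ⟨id1, id2, id2', id3, idc1, idc2, idc3, idc4⟩ :=
    matrix_ids P₁ P₂ P₃ hA hB hD hc₁₂ hc₂₃ hc₃₁
  have h16 : (16 : Matrix (Fin n → Fin 2) (Fin n → Fin 2) ℂ) = (16:ℂ) • 1 := by
    rw [← Algebra.algebraMap_eq_smul_one]; exact (map_ofNat _ 16).symm
  have h8 : (8 : Matrix (Fin n → Fin 2) (Fin n → Fin 2) ℂ) = (8:ℂ) • 1 := by
    rw [← Algebra.algebraMap_eq_smul_one]; exact (map_ofNat _ 8).symm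
  have h4 : (4 : Matrix (Fin n → Fin 2) (Fin n → Fin 2) ℂ) = (4:ℂ) • 1 := by
    rw [← Algebra.algebraMap_eq_smul_one]; exact (map_ofNat _ 4).symm
  have h2 : (2 : Matrix (Fin n → Fin 2) (Fin n → Fin 2) ℂ) = (2:ℂ) • 1 := by
    rw [← Algebra.algebraMap_eq_smul_one]; exact (map_ofNat _ 2).symm
  have h3 : (3 : Matrix (Fin n → Fin 2) (Fin n → Fin 2) ℂ) = (3:ℂ) • 1 := by
    rw [← Algebra.algebraMap_eq_smul_one]; exact (map_ofNat _ 3).symm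
  have hgX : gMat P₁ P₂ P₃ =
      (4⁻¹:ℂ) • (3 + (P₁ + P₂ + P₃ - P₁*P₂ - P₂*P₃ - P₃*P₁ + P₁*P₂*P₃)) := by
    simp only [gMat, h3]; module
  have hgXm : gMat P₁ (-P₂) P₃ =
      (4⁻¹:ℂ) • (3 + (P₁ + -P₂ + P₃ - P₁*(-P₂) - (-P₂)*P₃ - P₃*P₁ + P₁*(-P₂)*P₃)) := by
    simp only [gMat, h3]; module
  have hGG : gMat P₁ P₂ P₃ * gMat P₁ P₂ P₃ = 1 := by
    rw [hgX, smul_mul_assoc, mul_smul_comm, smul_smul, id1, h16, smul_smul]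
    norm_num
  have hinv : (gMat P₁ P₂ P₃)⁻¹ = gMat P₁ P₂ P₃ := Matrix.inv_eq_right_inv hGG
  have hM1 : gMat P₁ (-P₂) P₃ * gMat P₁ P₂ P₃ = (2⁻¹:ℂ) • (1 + P₁ + P₃ - P₁*P₃) := by
    rw [hgXm, hgX, smul_mul_assoc, mul_smul_comm, smul_smul, id2, h8, smul_mul_assoc,
      one_mul, smul_smul]
    norm_num
  have hM1' : gMat P₁ P₂ P₃ * gMat P₁ (-P₂) P₃ = (2⁻¹:ℂ) • (1 + P₁ + P₃ - P₁*P₃) := by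
    rw [hgX, hgXm, smul_mul_assoc, mul_smul_comm, smul_smul, id2', h8, smul_mul_assoc,
      one_mul, smul_smul]
    norm_num
  have hr : ((Real.sqrt 2 : ℝ) : ℂ) * ((Real.sqrt 2 : ℝ) : ℂ) = 2 := by
    norm_cast
    exact_mod_cast Real.mul_self_sqrt (by norm_num)
  have hqq : ((Real.sqrt 2 : ℝ) : ℂ)⁻¹ * ((Real.sqrt 2 : ℝ) : ℂ)⁻¹ = (2⁻¹:ℂ) := by
    rw [← mul_inv, hr]
  have e4 : expPauli 1 P₂ * expPauli (-1) (P₁ * P₂) * expPauli (-1) (P₂ * P₃) *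
      expPauli 1 (P₁ * P₂ * P₃) = (2⁻¹:ℂ) • (1 + P₁ + P₃ - P₁*P₃) := by
    simp only [expPauli, one_mul, neg_mul, neg_smul, ← sub_eq_add_neg,
      smul_mul_assoc, mul_smul_comm, smul_smul]
    rw [id3, h2, smul_mul_assoc, one_mul, smul_smul]
    match_scalars <;>
      first
        | linear_combination (2 * ((Real.sqrt 2 : ℝ) : ℂ)⁻¹ * ((Real.sqrt 2 : ℝ) : ℂ)⁻¹ + 1) * hqq
        | linear_combination (-(2 * ((Real.sqrt 2 : ℝ) : ℂ)⁻¹ * ((Real.sqrt 2 : ℝ) : ℂ)⁻¹) - 1) * hqq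
  constructor
  · rw [hinv, hM1, e4]
  · refine ⟨(2⁻¹:ℂ) • (1 + P₁ + P₃ - P₁*P₃), ?_, ?_⟩
    · intro B₀ hB₀
      have hCH : ((2⁻¹:ℂ) • (1 + P₁ + P₃ - P₁*P₃))ᴴ = (2⁻¹:ℂ) • (1 + P₁ + P₃ - P₁*P₃) := by
        rw [Matrix.conjTranspose_smul]
        simp only [Matrix.conjTranspose_add, Matrix.conjTranspose_sub,
          Matrix.conjTranspose_one, Matrix.conjTranspose_mul,
          pauli_herm h₁, pauli_herm h₃, hc₃₁]
        congr 1
        simp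
      rw [hCH]
      have hsmul : ∀ W : Matrix (Fin n → Fin 2) (Fin n → Fin 2) ℂ,
          ((2⁻¹:ℂ) • (1 + P₁ + P₃ - P₁*P₃)) * B₀ * ((2⁻¹:ℂ) • (1 + P₁ + P₃ - P₁*P₃))
            = (4⁻¹:ℂ) • ((1 + P₁ + P₃ - P₁*P₃) * B₀ * (1 + P₁ + P₃ - P₁*P₃)) := by
        intro W
        rw [smul_mul_assoc, smul_mul_assoc, mul_smul_comm, smul_smul]
        norm_num
      rcases pauli_comm_or_anti hB₀ h₁ with hsA | hsA <;>
        rcases pauli_comm_or_anti hB₀ h₃ with hsD | hsD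
      · -- commute, commute : result B₀
        refine ⟨1, B₀, hB₀, by simp, ?_⟩
        rw [hsmul 1, move1 hsA hsD, mul_assoc, idc1, h4, mul_smul_comm, mul_one,
          smul_smul, one_smul]
        norm_num
      · -- commute with P₁, anticommute with P₃ : result B₀ * P₁
        obtain ⟨z, P, hP, hz, hBP⟩ := pauli_mul_pauli hB₀ h₁
        refine ⟨z, P, hP, hz, ?_⟩
        rw [hsmul 1, move3 hsA hsD, mul_assoc, idc3, h4, smul_mul_assoc, one_mul,
          mul_smul_comm, smul_smul, hBP, smul_smul]
        norm_num
      · -- anticommute with P₁, commute with P₃ : result B₀ * P₃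
        obtain ⟨z, P, hP, hz, hBP⟩ := pauli_mul_pauli hB₀ h₃
        refine ⟨z, P, hP, hz, ?_⟩
        rw [hsmul 1, move2 hsA hsD, mul_assoc, idc2, h4, smul_mul_assoc, one_mul,
          mul_smul_comm, smul_smul, hBP, smul_smul]
        norm_num
      · -- anticommute with both : result -(B₀ * (P₁ * P₃))
        obtain ⟨z1, Q, hQ, hz1, hPQ⟩ := pauli_mul_pauli h₁ h₃
        obtain ⟨z2, P, hP, hz2, hBQ⟩ := pauli_mul_pauli hB₀ hQ
        refine ⟨-(z1*z2), P, hP, by simp [_root_.map_mul, hz1, hz2], ?_⟩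
        rw [hsmul 1, move4 hsA hsD, mul_assoc, idc4, h4, smul_mul_assoc, one_mul,
          mul_neg, mul_smul_comm, hPQ, mul_smul_comm, hBQ]
        match_scalars
        ring
    · rw [← hM1', ← mul_assoc, hGG, one_mul]
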